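/- Every x ∈ X^N satisfies the Nikol'skii-type inequality sup_{t∈[0,1]} |x(t)| ≤ (1−ε)^{−1}·N·‖x‖_{L_1[0,1]}. -/

import Mathlib

open MeasureTheory Set Finset

/-- The interval `I_k(i)` of width `1/(m*N)`, the `i`-th subinterval (1-based)
of `[(k-1)/N, k/N)`. -/
noncomputable def Ik (m N k i : ℕ) : Set ℝ :=
  Set.Ico (((k : ℝ) - 1) / N + ((i : ℝ) - 1) / (m * N))
    (((k : ℝ) - 1) / N + (i : ℝ) / (m * N))

/-- The functions `x_j` of the construction: for `1 ≤ j ≤ n`,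
`x_j = N·𝟙_{[(j-1)/N, j/N)}`, and for `n < j ≤ N`,
`x_j = N·∑_{k=1}^n 𝟙_{I_k(i_{k,j})} + N·𝟙_{[(j-1)/N, j/N)}`, where the indices
`i_{k,j}` are encoded (0-based) by the map `idx`. -/
noncomputable def xfun (n m N : ℕ) (idx : ℕ → Fin n → Fin m) (j : ℕ) : ℝ → ℝ :=
  fun t =>
    if j ≤ n then
      (N : ℝ) * Set.indicator (Set.Ico (((j : ℝ) - 1) / N) ((j : ℝ) / N)) (fun _ => (1 : ℝ)) t
    else
      (N : ℝ) * ∑ k : Fin n,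
          Set.indicator (Ik m N ((k : ℕ) + 1) ((idx j k : ℕ) + 1)) (fun _ => (1 : ℝ)) t
        + (N : ℝ) * Set.indicator (Set.Ico (((j : ℝ) - 1) / N) ((j : ℝ) / N)) (fun _ => (1 : ℝ)) t

/-- the `j`-th block. -/
noncomputable def Blk (N j : ℕ) : Set ℝ := Set.Ico (((j : ℝ) - 1) / N) ((j : ℝ) / N)

lemma Blk_eq (N j : ℕ) : Set.Ico (((j : ℝ) - 1) / N) ((j : ℝ) / N) = Blk N j := rfl

lemma measurableSet_Blk (N j : ℕ) : MeasurableSet (Blk N j) := measurableSet_Ico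

lemma measurableSet_Ik (m N k i : ℕ) : MeasurableSet (Ik m N k i) := measurableSet_Ico

lemma blk_disjoint {N j j' : ℕ} (hN : 0 < N) (h : j ≠ j') :
    Disjoint (Blk N j) (Blk N j') := by
  have hN' : (0:ℝ) < N := by exact_mod_cast hN
  rw [Blk, Blk, Set.Ico_disjoint_Ico]
  rcases lt_or_gt_of_ne h with hlt | hlt
  · have h1 : (j:ℝ) + 1 ≤ j' := by exact_mod_cast hlt
    have : (j:ℝ)/N ≤ ((j':ℝ)-1)/N := by gcongr; linarith
    calc (j:ℝ)/N ⊓ ((j':ℝ)/N) ≤ (j:ℝ)/N := inf_le_left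
      _ ≤ ((j':ℝ)-1)/N := this
      _ ≤ _ := le_sup_right
  · have h1 : (j':ℝ) + 1 ≤ j := by exact_mod_cast hlt
    have : (j':ℝ)/N ≤ ((j:ℝ)-1)/N := by gcongr; linarith
    calc (j:ℝ)/N ⊓ ((j':ℝ)/N) ≤ (j':ℝ)/N := inf_le_right
      _ ≤ ((j:ℝ)-1)/N := this
      _ ≤ _ := le_sup_left

lemma Ik_subset {m N k i : ℕ} (hm : 0 < m) (hN : 0 < N) (hi1 : 1 ≤ i) (him : i ≤ m) :
    Ik m N k i ⊆ Blk N k := by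
  have hN' : (0:ℝ) < N := by exact_mod_cast hN
  have hm' : (0:ℝ) < m := by exact_mod_cast hm
  have hmN : (0:ℝ) < (m:ℝ) * N := by positivity
  apply Set.Ico_subset_Ico
  · have : (0:ℝ) ≤ ((i:ℝ)-1)/((m:ℝ)*N) := by
      apply div_nonneg _ hmN.le
      have : (1:ℝ) ≤ i := by exact_mod_cast hi1
      linarith
    linarith
  · have h1 : (i:ℝ)/((m:ℝ)*N) ≤ (m:ℝ)/((m:ℝ)*N) := by
      gcongr
    have h2 : (m:ℝ)/((m:ℝ)*N) = 1/N := by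
      field_simp
    have : ((k:ℝ)-1)/N + 1/N = (k:ℝ)/N := by ring
    linarith

lemma Ik_disjoint {m N k i i' : ℕ} (hm : 0 < m) (hN : 0 < N) (h : i ≠ i') :
    Disjoint (Ik m N k i) (Ik m N k i') := by
  have hmN : (0:ℝ) < (m:ℝ) * N := by
    have hN' : (0:ℝ) < N := by exact_mod_cast hN
    have hm' : (0:ℝ) < m := by exact_mod_cast hm
    positivity
  rw [Ik, Ik, Set.Ico_disjoint_Ico]
  rcases lt_or_gt_of_ne h with hlt | hlt
  · have h1 : (i:ℝ) + 1 ≤ i' := by exact_mod_cast hlt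
    have : (i:ℝ)/((m:ℝ)*N) ≤ ((i':ℝ)-1)/((m:ℝ)*N) := by gcongr; linarith
    calc _ ≤ ((k:ℝ)-1)/N + (i:ℝ)/((m:ℝ)*N) := inf_le_left
      _ ≤ ((k:ℝ)-1)/N + ((i':ℝ)-1)/((m:ℝ)*N) := by linarith
      _ ≤ _ := le_sup_right
  · have h1 : (i':ℝ) + 1 ≤ i := by exact_mod_cast hlt
    have : (i':ℝ)/((m:ℝ)*N) ≤ ((i:ℝ)-1)/((m:ℝ)*N) := by gcongr; linarith
    calc _ ≤ ((k:ℝ)-1)/N + (i':ℝ)/((m:ℝ)*N) := inf_le_right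
      _ ≤ ((k:ℝ)-1)/N + ((i:ℝ)-1)/((m:ℝ)*N) := by linarith
      _ ≤ _ := le_sup_left

lemma not_mem_Ik_of_mem_blk {m N k k' i' : ℕ} (hm : 0 < m) (hN : 0 < N)
    (hne : k' ≠ k) (hi1 : 1 ≤ i') (him : i' ≤ m) {t : ℝ} (ht : t ∈ Blk N k) :
    t ∉ Ik m N k' i' := fun h =>
  Set.disjoint_left.mp (blk_disjoint hN hne) (Ik_subset hm hN hi1 him h) ht

lemma not_mem_blk_of_mem_blk {N k j : ℕ} (hN : 0 < N) (hne : j ≠ k) {t : ℝ}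
    (ht : t ∈ Blk N k) : t ∉ Blk N j := fun h =>
  Set.disjoint_left.mp (blk_disjoint hN hne) h ht

lemma ind_int {S : Set ℝ} (hS : MeasurableSet S) (c d : ℝ) :
    ∫ t in S, (Set.Ico c d).indicator (fun _ => (1:ℝ)) t =
      (volume (S ∩ Set.Ico c d)).toReal := by
  rw [MeasureTheory.setIntegral_indicator measurableSet_Ico, setIntegral_const]
  simp
  rfl

lemma ind_integrable (c d : ℝ) :
    Integrable ((Set.Ico c d).indicator (fun _ => (1:ℝ))) := by
  apply IntegrableOn.integrable_indicator _ measurableSet_Ico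
  exact integrableOn_const measure_Ico_lt_top.ne

lemma xfun_integrable (n m N : ℕ) (idx : ℕ → Fin n → Fin m) (j : ℕ) :
    Integrable (xfun n m N idx j) := by
  by_cases h : j ≤ n <;> unfold xfun <;> simp only [h, if_true, if_false]
  · exact (ind_integrable _ _).const_mul _
  · apply Integrable.add
    · apply Integrable.const_mul
      apply integrable_finset_sum
      intro k _
      exact ind_integrable _ _
    · exact (ind_integrable _ _).const_mul _

lemma vol_blk {N j : ℕ} (hN : 0 < N) : volume (Blk N j) = ENNReal.ofReal (1/N) := by
  have hN' : (0:ℝ) < N := by exact_mod_cast hN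
  rw [Blk, Real.volume_Ico]
  congr 1
  field_simp
  ring

lemma vol_Ik {m N k i : ℕ} (hm : 0 < m) (hN : 0 < N) :
    volume (Ik m N k i) = ENNReal.ofReal (1/((m:ℝ)*N)) := by
  have hN' : (0:ℝ) < N := by exact_mod_cast hN
  have hm' : (0:ℝ) < m := by exact_mod_cast hm
  rw [Ik, Real.volume_Ico]
  congr 1
  field_simp
  ring

lemma eval_high (n m N : ℕ) (idx : ℕ → Fin n → Fin m) (hm : 0 < m) (hN : 0 < N)
    {j₀ : ℕ} (hj₀ : n < j₀) (hj₀N : j₀ ≤ N) {t : ℝ} (ht : t ∈ Blk N j₀) (a : ℕ → ℝ) :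
    ∑ j ∈ Finset.Icc 1 N, a j * xfun n m N idx j t = N * a j₀ := by
  rw [Finset.sum_eq_single j₀]
  · have hj₀n : ¬ j₀ ≤ n := by omega
    unfold xfun
    simp only [hj₀n, if_false]
    have h1 : ∀ k : Fin n,
        Set.indicator (Ik m N ((k:ℕ)+1) ((idx j₀ k : ℕ)+1)) (fun _ => (1:ℝ)) t = 0 := by
      intro k
      apply Set.indicator_of_notMem
      exact not_mem_Ik_of_mem_blk hm hN (by omega : (k:ℕ)+1 ≠ j₀) (by omega)
        (by omega : (idx j₀ k : ℕ)+1 ≤ m) ht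
    rw [Finset.sum_congr rfl (fun k _ => h1 k)]
    rw [Blk_eq, Set.indicator_of_mem ht]
    simp
    ring
  · intro j hj hne
    rw [Finset.mem_Icc] at hj
    unfold xfun
    by_cases hjn : j ≤ n
    · simp only [hjn, if_true, Blk_eq]
      rw [Set.indicator_of_notMem (not_mem_blk_of_mem_blk hN hne ht)]
      ring
    · simp only [hjn, if_false]
      have h1 : ∀ k : Fin n,
          Set.indicator (Ik m N ((k:ℕ)+1) ((idx j k : ℕ)+1)) (fun _ => (1:ℝ)) t = 0 := by
        intro k
        apply Set.indicator_of_notMem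
        exact not_mem_Ik_of_mem_blk hm hN (by omega : (k:ℕ)+1 ≠ j₀) (by omega)
          (by omega : (idx j k : ℕ)+1 ≤ m) ht
      rw [Finset.sum_congr rfl (fun k _ => h1 k), Blk_eq,
        Set.indicator_of_notMem (not_mem_blk_of_mem_blk hN hne ht)]
      simp
  · intro h
    exact absurd (Finset.mem_Icc.2 ⟨by omega, hj₀N⟩) h

lemma eval_low (n m N : ℕ) (idx : ℕ → Fin n → Fin m) (hn : 0 < n) (hm : 0 < m)
    (hN : 0 < N) (hnN : n ≤ N) {k i : ℕ} (hk1 : 1 ≤ k) (hkn : k ≤ n) (hi1 : 1 ≤ i)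
    (him : i ≤ m) (hk' : k - 1 < n) {t : ℝ} (ht : t ∈ Ik m N k i) (a : ℕ → ℝ) :
    ∑ j ∈ Finset.Icc 1 N, a j * xfun n m N idx j t =
      N * a k + N * ∑ j ∈ (Finset.Ioc n N).filter
        (fun j => ((idx j ⟨k-1, hk'⟩ : ℕ) + 1 = i)), a j := by
  have htB : t ∈ Blk N k := Ik_subset hm hN hi1 him ht
  have hsplit : Finset.Icc 1 N = Finset.Ioc 0 n ∪ Finset.Ioc n N := by
    ext j
    simp only [Finset.mem_Icc, Finset.mem_Ioc, Finset.mem_union]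
    omega
  rw [hsplit, Finset.sum_union (by
    rw [Finset.disjoint_left]
    intro j hj hj'
    rw [Finset.mem_Ioc] at hj hj'
    omega)]
  congr 1
  · -- low part
    rw [Finset.sum_eq_single k]
    · have hkn' : k ≤ n := hkn
      unfold xfun
      simp only [hkn', if_true, Blk_eq]
      rw [Set.indicator_of_mem htB]
      ring
    · intro j hj hne
      unfold xfun
      rw [Finset.mem_Ioc] at hj
      simp only [hj.2, if_true, Blk_eq]
      rw [Set.indicator_of_notMem (not_mem_blk_of_mem_blk hN hne htB)]
      ring
    · intro h
      exact absurd (Finset.mem_Ioc.2 ⟨by omega, by omega⟩) h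
  · -- high part
    have hx : ∀ j ∈ Finset.Ioc n N, a j * xfun n m N idx j t =
        (if (idx j ⟨k-1, hk'⟩ : ℕ) + 1 = i then (N:ℝ) * a j else 0) := by
      intro j hj
      rw [Finset.mem_Ioc] at hj
      have hjn : ¬ j ≤ n := by omega
      unfold xfun
      simp only [hjn, if_false]
      have hBj : Set.indicator (Set.Ico (((j:ℝ)-1)/N) ((j:ℝ)/N)) (fun _ => (1:ℝ)) t = 0 := by
        rw [Blk_eq]
        exact Set.indicator_of_notMem (not_mem_blk_of_mem_blk hN (by omega) htB) _
      have hsum : ∑ k' : Fin n,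
          Set.indicator (Ik m N ((k':ℕ)+1) ((idx j k' : ℕ)+1)) (fun _ => (1:ℝ)) t =
          (if (idx j ⟨k-1, hk'⟩ : ℕ) + 1 = i then (1:ℝ) else 0) := by
        rw [Fintype.sum_eq_single (⟨k-1, hk'⟩ : Fin n)]
        · have hkk : (k - 1) + 1 = k := by omega
          by_cases hii : (idx j ⟨k-1, hk'⟩ : ℕ) + 1 = i
          · simp only [hii, if_true]
            rw [hkk, Set.indicator_of_mem ht]
          · simp only [hii, if_false]
            apply Set.indicator_of_notMem
            rw [hkk]
            intro hmem
            exact Set.disjoint_left.mp (Ik_disjoint hm hN hii) hmem ht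
        · intro k' hne
          apply Set.indicator_of_notMem
          have : (k':ℕ) + 1 ≠ k := by
            intro hc
            apply hne
            apply Fin.ext
            simp only []
            omega
          exact not_mem_Ik_of_mem_blk hm hN this (by omega)
            (by omega : (idx j k' : ℕ)+1 ≤ m) htB
      rw [hBj, hsum]
      by_cases hii : (idx j ⟨k-1, hk'⟩ : ℕ) + 1 = i <;> simp [hii] <;> ring
    rw [Finset.sum_congr rfl hx, Finset.sum_ite, Finset.sum_const_zero, add_zero,
      Finset.mul_sum]

lemma int_high (n m N : ℕ) (idx : ℕ → Fin n → Fin m) (hm : 0 < m) (hN : 0 < N)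
    {j₀ : ℕ} (hj₀ : n < j₀) (hj₀N : j₀ ≤ N) (a : ℕ → ℝ) :
    ∫ s in Blk N j₀, |∑ j ∈ Finset.Icc 1 N, a j * xfun n m N idx j s| = |a j₀| := by
  have hN' : (0:ℝ) < N := by exact_mod_cast hN
  rw [setIntegral_congr_fun (measurableSet_Blk N j₀)
    (g := fun _ => |(N:ℝ) * a j₀|) (fun s hs => by
      rw [eval_high n m N idx hm hN hj₀ hj₀N hs a])]
  rw [setIntegral_const, measureReal_def, vol_blk hN, ENNReal.toReal_ofReal (by positivity)]
  rw [smul_eq_mul, abs_mul, abs_of_nonneg hN'.le]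
  field_simp

lemma ind_integrable_Ik (m N k i : ℕ) :
    Integrable ((Ik m N k i).indicator (fun _ => (1:ℝ))) := ind_integrable _ _

lemma ind_int_Ik {S : Set ℝ} (hS : MeasurableSet S) (m N k i : ℕ) :
    ∫ t in S, (Ik m N k i).indicator (fun _ => (1:ℝ)) t =
      (volume (S ∩ Ik m N k i)).toReal := ind_int hS _ _

lemma xint (n m N : ℕ) (idx : ℕ → Fin n → Fin m) (hn : 0 < n) (hm : 0 < m) (hN : 0 < N)
    {j₀ : ℕ} (hj₀1 : 1 ≤ j₀) (hj₀n : j₀ ≤ n) {j : ℕ} (hj1 : 1 ≤ j) (hjN : j ≤ N) :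
    ∫ s in Blk N j₀, xfun n m N idx j s =
      if j = j₀ then 1 else if j ≤ n then 0 else 1/(m:ℝ) := by
  have hN' : (0:ℝ) < N := by exact_mod_cast hN
  have hm' : (0:ℝ) < m := by exact_mod_cast hm
  by_cases hjn : j ≤ n
  · unfold xfun
    simp only [hjn, if_true]
    rw [MeasureTheory.integral_const_mul, ind_int (measurableSet_Blk N j₀), Blk_eq]
    by_cases hjj : j = j₀
    · subst hjj
      rw [Set.inter_self, vol_blk hN, ENNReal.toReal_ofReal (by positivity)]
      rw [if_pos rfl]
      field_simp
    · rw [Set.disjoint_iff_inter_eq_empty.mp (blk_disjoint hN (by omega))]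
      simp [hjj, hjn]
  · have hjj : j ≠ j₀ := by omega
    unfold xfun
    simp only [hjn, if_false]
    rw [MeasureTheory.integral_add
      ((integrable_finset_sum _ (fun k _ => ind_integrable_Ik m N _ _)).const_mul
        (N:ℝ)).integrableOn
      ((ind_integrable _ _).const_mul (N:ℝ)).integrableOn]
    rw [MeasureTheory.integral_const_mul, MeasureTheory.integral_const_mul]
    rw [integral_finset_sum _ (fun k _ => (ind_integrable_Ik m N _ _).integrableOn)]
    have hB : ∫ s in Blk N j₀, (Set.Ico (((j:ℝ)-1)/N) ((j:ℝ)/N)).indicator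
        (fun _ => (1:ℝ)) s = 0 := by
      rw [ind_int (measurableSet_Blk N j₀), Blk_eq,
        Set.disjoint_iff_inter_eq_empty.mp (blk_disjoint hN (by omega))]
      simp
    have hIks : ∀ k : Fin n, ∫ s in Blk N j₀,
        (Ik m N ((k:ℕ)+1) ((idx j k : ℕ)+1)).indicator (fun _ => (1:ℝ)) s =
        if ((k:ℕ)+1 = j₀) then 1/((m:ℝ)*N) else 0 := by
      intro k
      rw [ind_int_Ik (measurableSet_Blk N j₀)]
      by_cases hk : (k:ℕ)+1 = j₀
      · rw [if_pos hk, hk,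
          Set.inter_eq_self_of_subset_right (Ik_subset hm hN (by omega) (by omega)),
          vol_Ik hm hN, ENNReal.toReal_ofReal (by positivity)]
      · rw [if_neg hk, Set.disjoint_iff_inter_eq_empty.mp
          ((blk_disjoint hN (fun hc => hk hc.symm)).mono_right
            (Ik_subset hm hN (by omega) (by omega)))]
        simp
    rw [Finset.sum_congr rfl (fun k _ => hIks k), hB, mul_zero, add_zero]
    rw [Finset.sum_eq_single (⟨j₀-1, by omega⟩ : Fin n)]
    · rw [if_pos (by simp; omega)]
      rw [if_neg hjj]
      field_simp
    · intro k _ hne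
      rw [if_neg]
      intro hc
      apply hne
      apply Fin.ext
      simp only []
      omega
    · intro h
      exact absurd (Finset.mem_univ _) h

lemma int_low (n m N : ℕ) (idx : ℕ → Fin n → Fin m) (hn : 0 < n) (hm : 0 < m) (hN : 0 < N)
    (hnN : n ≤ N) {j₀ : ℕ} (hj₀1 : 1 ≤ j₀) (hj₀n : j₀ ≤ n) (a : ℕ → ℝ) :
    ∫ s in Blk N j₀, (∑ j ∈ Finset.Icc 1 N, a j * xfun n m N idx j s) =
      a j₀ + (1/(m:ℝ)) * ∑ j ∈ Finset.Ioc n N, a j := by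
  rw [integral_finset_sum _
    (fun j _ => ((xfun_integrable n m N idx j).const_mul (a j)).integrableOn)]
  have hterm : ∀ j ∈ Finset.Icc 1 N, (∫ s in Blk N j₀, a j * xfun n m N idx j s) =
      a j * (if j = j₀ then 1 else if j ≤ n then 0 else 1/(m:ℝ)) := by
    intro j hj
    rw [Finset.mem_Icc] at hj
    rw [MeasureTheory.integral_const_mul, xint n m N idx hn hm hN hj₀1 hj₀n hj.1 hj.2]
  rw [Finset.sum_congr rfl hterm]
  have hsplit : Finset.Icc 1 N = Finset.Ioc 0 n ∪ Finset.Ioc n N := by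
    ext j
    simp only [Finset.mem_Icc, Finset.mem_Ioc, Finset.mem_union]
    omega
  rw [hsplit, Finset.sum_union (by
    rw [Finset.disjoint_left]
    intro j hj hj'
    rw [Finset.mem_Ioc] at hj hj'
    omega)]
  congr 1
  · rw [Finset.sum_eq_single j₀]
    · rw [if_pos rfl]
      ring
    · intro j hj hne
      rw [Finset.mem_Ioc] at hj
      rw [if_neg hne, if_pos hj.2, mul_zero]
    · intro h
      exact absurd (Finset.mem_Ioc.2 ⟨by omega, by omega⟩) h
  · rw [Finset.mul_sum]
    apply Finset.sum_congr rfl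
    intro j hj
    rw [Finset.mem_Ioc] at hj
    rw [if_neg (by omega), if_neg (by omega)]
    ring

lemma mem_Ik_floor (m N : ℕ) (hm : 0 < m) (hN : 0 < N) {t : ℝ} (ht : t ∈ Set.Ico (0:ℝ) 1)
    {p : ℕ} (hp : p = ⌊t * ((m:ℝ)*(N:ℝ))⌋₊) :
    p < m * N ∧ t ∈ Ik m N (p/m + 1) (p % m + 1) := by
  have hN' : (0:ℝ) < N := by exact_mod_cast hN
  have hm' : (0:ℝ) < m := by exact_mod_cast hm
  have hmN : (0:ℝ) < (m:ℝ)*N := by positivity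
  obtain ⟨ht0, ht1⟩ := ht
  have h0 : 0 ≤ t * ((m:ℝ)*N) := by positivity
  have hp1 : (p:ℝ) ≤ t * ((m:ℝ)*N) := by rw [hp]; exact Nat.floor_le h0
  have hp2 : t * ((m:ℝ)*N) < p + 1 := by rw [hp]; exact Nat.lt_floor_add_one _
  have hplt : p < m * N := by
    rw [hp, Nat.floor_lt h0]
    push_cast
    nlinarith
  refine ⟨hplt, ?_⟩
  have hdm : m * (p / m) + p % m = p := Nat.div_add_mod p m
  have hA : ((((p/m + 1 : ℕ)):ℝ) - 1)/N + ((((p % m + 1 : ℕ)):ℝ) - 1)/((m:ℝ)*N)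
      = (p:ℝ)/((m:ℝ)*N) := by
    have hdm' : (p:ℝ) = (m:ℝ)*((p/m : ℕ):ℝ) + ((p % m : ℕ):ℝ) := by exact_mod_cast hdm.symm
    push_cast
    field_simp
    rw [hdm']
    ring
  have hB : ((((p/m + 1 : ℕ)):ℝ) - 1)/N + (((p % m + 1 : ℕ)):ℝ)/((m:ℝ)*N)
      = ((p:ℝ)+1)/((m:ℝ)*N) := by
    have hdm' : (p:ℝ) = (m:ℝ)*((p/m : ℕ):ℝ) + ((p % m : ℕ):ℝ) := by exact_mod_cast hdm.symm
    push_cast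
    field_simp
    rw [hdm']
    ring
  rw [Ik, Set.mem_Ico, hA, hB]
  constructor
  · rw [div_le_iff₀ hmN]
    linarith
  · rw [lt_div_iff₀ hmN]
    linarith

lemma blk_subset_unit {N j : ℕ} (hN : 0 < N) (hj1 : 1 ≤ j) (hjN : j ≤ N) :
    Blk N j ⊆ Set.Ico (0:ℝ) 1 := by
  have hN' : (0:ℝ) < N := by exact_mod_cast hN
  apply Set.Ico_subset_Ico
  · apply div_nonneg _ hN'.le
    have : (1:ℝ) ≤ j := by exact_mod_cast hj1
    linarith
  · rw [div_le_one hN']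
    exact_mod_cast hjN

lemma xfun_one (n m N : ℕ) (idx : ℕ → Fin n → Fin m) (hm : 0 < m) (hN : 0 < N)
    (hnN : n ≤ N) {j : ℕ} (hjN : j ≤ N) : xfun n m N idx j 1 = 0 := by
  have hN' : (0:ℝ) < N := by exact_mod_cast hN
  have hm' : (0:ℝ) < m := by exact_mod_cast hm
  have hjN' : (j:ℝ) ≤ N := by exact_mod_cast hjN
  have hBj : (1:ℝ) ∉ Set.Ico (((j:ℝ)-1)/N) ((j:ℝ)/N) := by
    rw [Set.mem_Ico]
    push_neg
    intro _
    rw [div_le_one hN'] at *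
    exact hjN'
  unfold xfun
  by_cases h : j ≤ n <;> simp only [h, if_true, if_false]
  · rw [Set.indicator_of_notMem hBj]
    ring
  · rw [Set.indicator_of_notMem hBj]
    have : ∀ k : Fin n, Set.indicator (Ik m N ((k:ℕ)+1) ((idx j k : ℕ)+1))
        (fun _ => (1:ℝ)) 1 = 0 := by
      intro k
      apply Set.indicator_of_notMem
      rw [Ik, Set.mem_Ico]
      push_neg
      intro h1
      have hk1 : ((k:ℕ):ℝ) + 1 ≤ N := by
        have : (k:ℕ) + 1 ≤ N := by omega
        exact_mod_cast this
      have hi : ((((idx j k : ℕ)+1 : ℕ)):ℝ) ≤ m := by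
        have : (idx j k : ℕ) + 1 ≤ m := by omega
        exact_mod_cast this
      have e1 : ((((k:ℕ)+1 : ℕ)):ℝ) - 1 = ((k:ℕ):ℝ) := by push_cast; ring
      rw [e1]
      have h2 : ((((idx j k : ℕ)+1 : ℕ)):ℝ)/((m:ℝ)*N) ≤ 1/N := by
        rw [div_le_div_iff₀ (by positivity) hN']
        push_cast at hi ⊢
        nlinarith
      have h3 : ((k:ℕ):ℝ)/N + 1/N ≤ 1 := by
        rw [← add_div, div_le_one hN']
        linarith
      linarith
    rw [Finset.sum_congr rfl (fun k _ => this k), Finset.sum_const_zero]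
    ring

theorem stmt2 (n m N : ℕ) (ε : ℝ) (hn : 0 < n) (hε : 0 < ε) (hε1 : ε < 1)
    (hm : (m : ℝ) = n / ε) (hN : N = n + m ^ n)
    (idx : ℕ → Fin n → Fin m) (hidx : Set.BijOn idx (Set.Ioc n N) Set.univ) :
    ∀ x ∈ Submodule.span ℝ (xfun n m N idx '' Set.Icc 1 N), ∀ t ∈ Set.Icc (0 : ℝ) 1,
      |x t| ≤ (1 - ε)⁻¹ * N * ∫ s in Set.Ico (0 : ℝ) 1, |x s| := by
  have hm0 : 0 < m := by
    rcases Nat.eq_zero_or_pos m with h | h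
    · exfalso
      rw [h] at hm
      have hn' : (0:ℝ) < n := by exact_mod_cast hn
      have : (0:ℝ) < (n:ℝ)/ε := by positivity
      simp only [Nat.cast_zero] at hm
      linarith
    · exact h
  have hN0 : 0 < N := by omega
  have hnN : n < N := by
    have := Nat.one_le_pow n m hm0
    omega
  have hN' : (0:ℝ) < N := by exact_mod_cast hN0
  have hm' : (0:ℝ) < m := by exact_mod_cast hm0
  have h1ε : (0:ℝ) < 1 - ε := by linarith
  have hεm : 1/(m:ℝ) ≤ ε := by
    rw [hm, one_div_div]
    apply div_le_self hε.le
    exact_mod_cast hn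
  have hfac : 1 + 1/(m:ℝ) ≤ (1-ε)⁻¹ := by
    rw [inv_eq_one_div, le_div_iff₀ h1ε]
    nlinarith
  have hinv1 : (1:ℝ) ≤ (1-ε)⁻¹ := by
    rw [inv_eq_one_div, le_div_iff₀ h1ε]
    linarith
  intro x hx t ht
  rw [Finsupp.mem_span_image_iff_linearCombination] at hx
  obtain ⟨l, hl, rfl⟩ := hx
  rw [Finsupp.mem_supported] at hl
  have hXeq : (Finsupp.linearCombination ℝ (xfun n m N idx)) l =
      fun s => ∑ j ∈ Finset.Icc 1 N, l j * xfun n m N idx j s := by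
    have hsub : l.support ⊆ Finset.Icc 1 N := fun j hj => by
      have := hl hj
      rw [Set.mem_Icc] at this
      rw [Finset.mem_Icc]
      exact this
    have hrw := Finsupp.sum_of_support_subset l hsub
      (fun i a => a • xfun n m N idx i) (fun j _ => zero_smul ℝ _)
    rw [Finsupp.linearCombination_apply, hrw]
    funext s
    rw [Finset.sum_apply]
    apply Finset.sum_congr rfl
    intro j _
    simp [smul_eq_mul]
  rw [hXeq]
  beta_reduce
  have hIntX : Integrable (fun s => ∑ j ∈ Finset.Icc 1 N, l j * xfun n m N idx j s) :=
    integrable_finset_sum _ (fun j _ => (xfun_integrable n m N idx j).const_mul (l j))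
  have hIntAbs : Integrable (fun s => |∑ j ∈ Finset.Icc 1 N, l j * xfun n m N idx j s|) :=
    hIntX.abs
  set I := ∫ s in Set.Ico (0:ℝ) 1, |∑ j ∈ Finset.Icc 1 N, l j * xfun n m N idx j s| with hI
  clear_value I
  have hI0 : 0 ≤ I := by
    rw [hI]
    exact setIntegral_nonneg measurableSet_Ico (fun s _ => abs_nonneg _)
  have hIup : ∀ (s : Finset ℕ), (∀ j ∈ s, 1 ≤ j ∧ j ≤ N) →
      ∑ j ∈ s, ∫ u in Blk N j, |∑ j' ∈ Finset.Icc 1 N, l j' * xfun n m N idx j' u| ≤ I := by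
    intro s hs
    rw [← MeasureTheory.integral_biUnion_finset s (fun j _ => measurableSet_Blk N j)
      (fun j hj j' hj' hne => blk_disjoint hN0 hne)
      (fun j _ => hIntAbs.integrableOn)]
    rw [hI]
    apply setIntegral_mono_set hIntAbs.integrableOn
      (Filter.Eventually.of_forall (fun u => abs_nonneg _))
    exact HasSubset.Subset.eventuallyLE
      (Set.iUnion₂_subset fun j hj => blk_subset_unit hN0 (hs j hj).1 (hs j hj).2)
  rw [Set.mem_Icc] at ht
  by_cases ht1 : t < 1
  case neg =>
    have ht1' : t = 1 := le_antisymm ht.2 (not_lt.mp ht1)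
    have hX1 : ∑ j ∈ Finset.Icc 1 N, l j * xfun n m N idx j t = 0 := by
      rw [ht1']
      apply Finset.sum_eq_zero
      intro j hj
      rw [Finset.mem_Icc] at hj
      rw [xfun_one n m N idx hm0 hN0 (le_of_lt hnN) hj.2, mul_zero]
    rw [hX1, abs_zero]
    have h0ε : (0:ℝ) ≤ (1-ε)⁻¹ := by positivity
    exact mul_nonneg (mul_nonneg h0ε hN'.le) hI0
  case pos =>
  have htI : t ∈ Set.Ico (0:ℝ) 1 := ⟨ht.1, ht1⟩
  set p := ⌊t * ((m:ℝ)*(N:ℝ))⌋₊ with hp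
  obtain ⟨hplt, htIk⟩ := mem_Ik_floor m N hm0 hN0 htI hp
  clear_value p
  have hi₀1 : 1 ≤ p % m + 1 := by omega
  have hi₀m : p % m + 1 ≤ m := Nat.succ_le_of_lt (Nat.mod_lt p hm0)
  have hj₀1 : 1 ≤ p / m + 1 := Nat.succ_le_succ (Nat.zero_le _)
  have hj₀N : p / m + 1 ≤ N := Nat.succ_le_of_lt (Nat.div_lt_of_lt_mul hplt)
  have htB : t ∈ Blk N (p / m + 1) := Ik_subset hm0 hN0 hi₀1 hi₀m htIk
  by_cases hj₀n : p / m + 1 ≤ n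
  · -- low case
    have hk' : (p / m + 1) - 1 < n := by
      rw [Nat.add_sub_cancel]
      exact hj₀n
    have hXt := eval_low n m N idx hn hm0 hN0 (le_of_lt hnN) hj₀1 hj₀n hi₀1 hi₀m hk' htIk ⇑l
    set F := (Finset.Ioc n N).filter
      (fun j => ((idx j ⟨(p / m + 1) - 1, hk'⟩ : ℕ) + 1 = p % m + 1)) with hF
    set S := ∑ j ∈ F, l j with hS
    set B := ∑ j ∈ Finset.Ioc n N, |l j| with hB
    set B' := ∑ j ∈ Finset.Ioc n N, l j with hB'
    have hIlow := int_low n m N idx hn hm0 hN0 (le_of_lt hnN) hj₀1 hj₀n ⇑l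
    have h1 : |l (p / m + 1) + (1/(m:ℝ))*B'| ≤
        ∫ s in Blk N (p / m + 1), |∑ j ∈ Finset.Icc 1 N, l j * xfun n m N idx j s| := by
      rw [← hIlow]
      have := MeasureTheory.norm_integral_le_integral_norm
        (μ := volume.restrict (Blk N (p / m + 1)))
        (f := fun s => ∑ j ∈ Finset.Icc 1 N, l j * xfun n m N idx j s)
      simpa [Real.norm_eq_abs] using this
    have h2 : (∫ s in Blk N (p / m + 1), |∑ j ∈ Finset.Icc 1 N, l j * xfun n m N idx j s|)
        + B ≤ I := by
      have hup := hIup (insert (p / m + 1) (Finset.Ioc n N)) (fun j hj => by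
        simp only [Finset.mem_insert, Finset.mem_Ioc] at hj
        rcases hj with h | h
        · subst h
          exact ⟨hj₀1, hj₀N⟩
        · exact ⟨by omega, h.2⟩)
      rw [Finset.sum_insert (by
        simp only [Finset.mem_Ioc]
        intro hc
        exact absurd hj₀n (not_le.mpr hc.1))] at hup
      have hsum : ∑ j ∈ Finset.Ioc n N,
          ∫ u in Blk N j, |∑ j' ∈ Finset.Icc 1 N, l j' * xfun n m N idx j' u| = B := by
        apply Finset.sum_congr rfl
        intro j hj
        rw [Finset.mem_Ioc] at hj
        exact int_high n m N idx hm0 hN0 hj.1 hj.2 ⇑l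
      rw [hsum] at hup
      exact hup
    have h0' : 0 ≤ ∫ s in Blk N (p / m + 1),
        |∑ j ∈ Finset.Icc 1 N, l j * xfun n m N idx j s| :=
      setIntegral_nonneg (measurableSet_Blk N _) (fun _ _ => abs_nonneg _)
    have h5 : B ≤ I := by linarith
    have h3 : |B'| ≤ B := Finset.abs_sum_le_sum_abs _ _
    have h4 : |S| ≤ B :=
      le_trans (Finset.abs_sum_le_sum_abs _ _)
        (Finset.sum_le_sum_of_subset_of_nonneg (Finset.filter_subset _ _)
          (fun j _ _ => abs_nonneg _))
    have hA : |l (p / m + 1) + S| ≤ (1-ε)⁻¹ * I := by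
      have e1 : |l (p / m + 1)| ≤ |l (p / m + 1) + (1/(m:ℝ))*B'| + (1/(m:ℝ))*|B'| := by
        calc |l (p / m + 1)| = |(l (p / m + 1) + (1/(m:ℝ))*B') + (-((1/(m:ℝ))*B'))| := by
              ring_nf
          _ ≤ |l (p / m + 1) + (1/(m:ℝ))*B'| + |(-((1/(m:ℝ))*B'))| := abs_add_le _ _
          _ = |l (p / m + 1) + (1/(m:ℝ))*B'| + (1/(m:ℝ))*|B'| := by
              rw [abs_neg, abs_mul, abs_of_nonneg (by positivity : (0:ℝ) ≤ 1/(m:ℝ))]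
      have e2 : |l (p / m + 1) + S| ≤ |l (p / m + 1)| + |S| := abs_add_le _ _
      have hmB : (1/(m:ℝ)) * B ≤ (1/(m:ℝ)) * I := mul_le_mul_of_nonneg_left h5 (by positivity)
      have h1m : (1/(m:ℝ))*|B'| ≤ (1/(m:ℝ))*B := mul_le_mul_of_nonneg_left h3 (by positivity)
      have e5 : (1 + 1/(m:ℝ)) * I ≤ (1-ε)⁻¹ * I := mul_le_mul_of_nonneg_right hfac hI0
      nlinarith
    rw [hXt]
    have hfactor : (N:ℝ) * l (p / m + 1) + (N:ℝ) * S = N * (l (p / m + 1) + S) := by ring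
    rw [hfactor, abs_mul, abs_of_nonneg hN'.le]
    calc (N:ℝ) * |l (p / m + 1) + S| ≤ N * ((1-ε)⁻¹ * I) :=
          mul_le_mul_of_nonneg_left hA hN'.le
      _ = (1-ε)⁻¹ * N * I := by rw [← mul_assoc, mul_comm (N:ℝ) (1-ε)⁻¹]
  · -- high case
    have hlt : n < p / m + 1 := not_le.mp hj₀n
    have hXt := eval_high n m N idx hm0 hN0 hlt hj₀N htB ⇑l
    have h2 : |l (p / m + 1)| ≤ I := by
      have hup := hIup {p / m + 1} (by
        intro j hj
        simp only [Finset.mem_singleton] at hj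
        subst hj
        exact ⟨hj₀1, hj₀N⟩)
      rw [Finset.sum_singleton,
        int_high n m N idx hm0 hN0 hlt hj₀N ⇑l] at hup
      exact hup
    rw [hXt, abs_mul, abs_of_nonneg hN'.le]
    calc (N:ℝ) * |l (p / m + 1)| ≤ N * I := mul_le_mul_of_nonneg_left h2 hN'.le
      _ ≤ (1-ε)⁻¹ * (N * I) := le_mul_of_one_le_left (mul_nonneg hN'.le hI0) hinv1
      _ = (1-ε)⁻¹ * N * I := (mul_assoc _ _ _).symm
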